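/- Let X₁,…,X_T be i.i.d. real random variables with score W satisfying E[W(X)] = 0, f a bounded observable, f̄_T = (1/T) Σ_{t=1}^T f(X_t) the ergodic average, and W_T = Σ_{t=1}^T W(X_t). Then Var[f̄_T · W_T] = T (E[f(X)])² E[W(X)²] + O(1) as T → ∞. -/

import Mathlib

open MeasureTheory ProbabilityTheory

section helpers
variable {Ω : Type*} [MeasureSpace Ω] [IsProbabilityMeasure (ℙ : Measure Ω)]

lemma abs_mul_le4 {a b A B : ℝ} (ha : |a| ≤ A) (hb : |b| ≤ B) : |a * b| ≤ A * B := by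
  rw [abs_mul]; exact mul_le_mul ha hb (abs_nonneg _) ((abs_nonneg _).trans ha)

lemma bdd_integrable {φ : Ω → ℝ} (hm : Measurable φ) {C : ℝ} (hb : ∀ ω, |φ ω| ≤ C) :
    Integrable φ ℙ :=
  (integrable_const C).mono' hm.aestronglyMeasurable
    (Filter.Eventually.of_forall fun ω => by simpa using hb ω)

lemma bdd_memLp2 {φ : Ω → ℝ} (hm : Measurable φ) {C : ℝ} (hb : ∀ ω, |φ ω| ≤ C) :
    MemLp φ 2 ℙ :=
  (memLp_top_of_bound hm.aestronglyMeasurable C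
    (Filter.Eventually.of_forall fun ω => by simpa using hb ω)).mono_exponent le_top

lemma abs_integral_le' {φ : Ω → ℝ} {C : ℝ} (hb : ∀ ω, |φ ω| ≤ C) : |∫ ω, φ ω| ≤ C := by
  have := norm_integral_le_of_norm_le_const (μ := (ℙ : Measure Ω)) (f := φ) (C := C)
    (Filter.Eventually.of_forall fun ω => by simpa using hb ω)
  simpa using this

variable (X : ℕ → Ω → ℝ)

lemma factor_pair (hXmeas : ∀ t, Measurable (X t))
    (hindep : iIndepFun X ℙ)
    {t s : ℕ} (hts : t ≠ s) {φ ψ : ℝ → ℝ} (hφ : Measurable φ) (hψ : Measurable ψ)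
    {Cφ Cψ : ℝ} (hφb : ∀ x, |φ x| ≤ Cφ) (hψb : ∀ x, |ψ x| ≤ Cψ) :
    ∫ ω, φ (X t ω) * ψ (X s ω) = (∫ ω, φ (X t ω)) * ∫ ω, ψ (X s ω) := by
  have hi : IndepFun (fun ω => φ (X t ω)) (fun ω => ψ (X s ω)) ℙ :=
    (hindep.indepFun hts).comp hφ hψ
  exact hi.integral_fun_mul_eq_mul_integral
    (bdd_integrable (hφ.comp (hXmeas t)) (fun ω => hφb _)).aestronglyMeasurable
    (bdd_integrable (hψ.comp (hXmeas s)) (fun ω => hψb _)).aestronglyMeasurable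

lemma factor_one_pair (hXmeas : ∀ t, Measurable (X t))
    (hindep : iIndepFun X ℙ)
    {s v t : ℕ} (hst : s ≠ t) (hvt : v ≠ t)
    {φ ψ χ : ℝ → ℝ} (hφ : Measurable φ) (hψ : Measurable ψ) (hχ : Measurable χ)
    {Cφ Cψ Cχ : ℝ} (hφb : ∀ x, |φ x| ≤ Cφ) (hψb : ∀ x, |ψ x| ≤ Cψ) (hχb : ∀ x, |χ x| ≤ Cχ) :
    ∫ ω, φ (X s ω) * ψ (X v ω) * χ (X t ω)
      = (∫ ω, φ (X s ω) * ψ (X v ω)) * ∫ ω, χ (X t ω) := by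
  have hpair : IndepFun (fun a => (X s a, X v a)) (X t) ℙ :=
    hindep.indepFun_prodMk hXmeas s v t hst hvt
  have hi : IndepFun (fun ω => φ (X s ω) * ψ (X v ω)) (fun ω => χ (X t ω)) ℙ :=
    hpair.comp (by fun_prop : Measurable (fun p : ℝ × ℝ => φ p.1 * ψ p.2)) hχ
  exact hi.integral_fun_mul_eq_mul_integral
    (bdd_integrable (by fun_prop) (fun ω => abs_mul_le4 (hφb _) (hψb _))).aestronglyMeasurable
    (bdd_integrable (hχ.comp (hXmeas t)) (fun ω => hχb _)).aestronglyMeasurable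

lemma factor_one_triple (hXmeas : ∀ t, Measurable (X t))
    (hindep : iIndepFun X ℙ)
    {t s u v : ℕ} (hvt : v ≠ t) (hvs : v ≠ s) (hvu : v ≠ u)
    {φ₁ φ₂ φ₃ ψ : ℝ → ℝ} (h1 : Measurable φ₁) (h2 : Measurable φ₂) (h3 : Measurable φ₃)
    (h4 : Measurable ψ)
    {C1 C2 C3 C4 : ℝ} (hb1 : ∀ x, |φ₁ x| ≤ C1) (hb2 : ∀ x, |φ₂ x| ≤ C2)
    (hb3 : ∀ x, |φ₃ x| ≤ C3) (hb4 : ∀ x, |ψ x| ≤ C4) :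
    ∫ ω, φ₁ (X t ω) * φ₂ (X s ω) * φ₃ (X u ω) * ψ (X v ω)
      = (∫ ω, φ₁ (X t ω) * φ₂ (X s ω) * φ₃ (X u ω)) * ∫ ω, ψ (X v ω) := by
  classical
  have hdisj : Disjoint ({t, s, u} : Finset ℕ) ({v} : Finset ℕ) := by
    simp only [Finset.disjoint_left, Finset.mem_insert, Finset.mem_singleton]
    rintro a (rfl | rfl | rfl) ha <;> simp_all
  have hbase := hindep.indepFun_finset ({t, s, u} : Finset ℕ) ({v} : Finset ℕ) hdisj hXmeas
  have htm : t ∈ ({t, s, u} : Finset ℕ) := by simp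
  have hsm : s ∈ ({t, s, u} : Finset ℕ) := by simp
  have hum : u ∈ ({t, s, u} : Finset ℕ) := by simp
  have hvm : v ∈ ({v} : Finset ℕ) := by simp
  have hi : IndepFun (fun ω => φ₁ (X t ω) * φ₂ (X s ω) * φ₃ (X u ω))
      (fun ω => ψ (X v ω)) ℙ := by
    have hL : Measurable (fun p : (({t, s, u} : Finset ℕ) → ℝ) =>
        φ₁ (p ⟨t, htm⟩) * φ₂ (p ⟨s, hsm⟩) * φ₃ (p ⟨u, hum⟩)) := by fun_prop
    have hR : Measurable (fun p : (({v} : Finset ℕ) → ℝ) => ψ (p ⟨v, hvm⟩)) := by fun_prop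
    exact hbase.comp hL hR
  exact hi.integral_fun_mul_eq_mul_integral
    (bdd_integrable (by fun_prop)
      (fun ω => abs_mul_le4 (abs_mul_le4 (hb1 _) (hb2 _)) (hb3 _))).aestronglyMeasurable
    (bdd_integrable (h4.comp (hXmeas v)) (fun ω => hb4 _)).aestronglyMeasurable

end helpers

lemma quad_count (T : ℕ) :
    ((((Finset.range T ×ˢ Finset.range T) ×ˢ (Finset.range T ×ˢ Finset.range T))).filter
      (fun q : (ℕ × ℕ) × (ℕ × ℕ) =>
        (q.1.1 = q.1.2 ∨ q.1.1 = q.2.1 ∨ q.1.1 = q.2.2) ∧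
        (q.1.2 = q.1.1 ∨ q.1.2 = q.2.1 ∨ q.1.2 = q.2.2) ∧
        (q.2.1 = q.1.1 ∨ q.2.1 = q.1.2 ∨ q.2.1 = q.2.2) ∧
        (q.2.2 = q.1.1 ∨ q.2.2 = q.1.2 ∨ q.2.2 = q.2.1))).card ≤ 8 * T ^ 2 := by
  classical
  set F : (ℕ × ℕ) × (Bool × Bool × Bool) → (ℕ × ℕ) × (ℕ × ℕ) := fun x =>
    ((x.1.1, cond x.2.1 x.1.1 x.1.2), (cond x.2.2.1 x.1.1 x.1.2, cond x.2.2.2 x.1.1 x.1.2))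
    with hF
  have hsub : (((Finset.range T ×ˢ Finset.range T) ×ˢ
      (Finset.range T ×ˢ Finset.range T))).filter
      (fun q : (ℕ × ℕ) × (ℕ × ℕ) =>
        (q.1.1 = q.1.2 ∨ q.1.1 = q.2.1 ∨ q.1.1 = q.2.2) ∧
        (q.1.2 = q.1.1 ∨ q.1.2 = q.2.1 ∨ q.1.2 = q.2.2) ∧
        (q.2.1 = q.1.1 ∨ q.2.1 = q.1.2 ∨ q.2.1 = q.2.2) ∧
        (q.2.2 = q.1.1 ∨ q.2.2 = q.1.2 ∨ q.2.2 = q.2.1)) ⊆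
      ((Finset.range T ×ˢ Finset.range T) ×ˢ
        (Finset.univ : Finset (Bool × Bool × Bool))).image F := by
    rintro ⟨⟨t, u⟩, ⟨s, v⟩⟩ hq
    simp only [Finset.mem_filter, Finset.mem_product, Finset.mem_range] at hq
    obtain ⟨⟨⟨ht, hu⟩, hs, hv⟩, hP⟩ := hq
    set b : ℕ := if u ≠ t then u else if s ≠ t then s else v with hb
    have hbR : b < T := by rw [hb]; split_ifs <;> assumption
    have hco : (u = t ∨ u = b) ∧ (s = t ∨ s = b) ∧ (v = t ∨ v = b) := by
      rw [hb]; split_ifs <;> omega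
    refine Finset.mem_image.2 ⟨((t, b), (decide (u = t), decide (s = t), decide (v = t))),
      ?_, ?_⟩
    · simp [Finset.mem_product, ht, hbR]
    · simp only [hF]
      by_cases h1 : u = t <;> by_cases h2 : s = t <;> by_cases h3 : v = t <;>
        simp [h1, h2, h3] <;> omega
  calc _ ≤ (((Finset.range T ×ˢ Finset.range T) ×ˢ
        (Finset.univ : Finset (Bool × Bool × Bool))).image F).card :=
      Finset.card_le_card hsub
    _ ≤ ((Finset.range T ×ˢ Finset.range T) ×ˢ
        (Finset.univ : Finset (Bool × Bool × Bool))).card := Finset.card_image_le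
    _ = 8 * T ^ 2 := by
      simp [Finset.card_product]
      ring

/-- For i.i.d. samples with mean-zero score `W` and bounded `f`, the ergodic
average `f̄_T = T⁻¹ Σ f(X_t)` and total score `W_T = Σ W(X_t)` satisfy
`Var[f̄_T · W_T] = T (E[f])² E[W²] + O(1)` uniformly in `T ≥ 1`. -/
theorem variance_uncentered_ergodic_LR_estimator_linear_growth
    {Ω : Type*} [MeasureSpace Ω] [IsProbabilityMeasure (ℙ : Measure Ω)]
    (X : ℕ → Ω → ℝ) (hXmeas : ∀ t, Measurable (X t))
    (hindep : iIndepFun X ℙ)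
    (hid : ∀ t, IdentDistrib (X t) (X 0) ℙ ℙ)
    (f W : ℝ → ℝ) (hf : Measurable f) (hW : Measurable W)
    (Cf CW : ℝ) (hfbdd : ∀ x, |f x| ≤ Cf) (hWbdd : ∀ x, |W x| ≤ CW)
    (hW0 : ∫ ω, W (X 0 ω) = 0) :
    ∃ C : ℝ, ∀ T : ℕ, 1 ≤ T →
      |variance (fun ω =>
          ((T : ℝ)⁻¹ * ∑ t ∈ Finset.range T, f (X t ω)) * ∑ t ∈ Finset.range T, W (X t ω)) ℙ -
        (T : ℝ) * ((∫ ω, f (X 0 ω)) ^ 2 * ∫ ω, (W (X 0 ω)) ^ 2)| ≤ C := by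
  classical
  have hCf0 : 0 ≤ Cf := (abs_nonneg _).trans (hfbdd 0)
  have hCW0 : 0 ≤ CW := (abs_nonneg _).trans (hWbdd 0)
  set a : ℝ := ∫ ω, f (X 0 ω) with ha_def
  set g : ℝ → ℝ := fun x => f x - a with hg_def
  have hg : Measurable g := hf.sub measurable_const
  have ha : |a| ≤ Cf := abs_integral_le' (fun ω => hfbdd _)
  have hgb : ∀ x, |g x| ≤ 2 * Cf := by
    intro x
    rw [hg_def]
    have h1 := hfbdd x
    have h2 := ha
    have h3 := abs_sub_abs_le_abs_sub (f x) a
    have h4 : |f x - a| ≤ |f x| + |a| := abs_sub (f x) a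
    linarith
  set b : ℝ := ∫ ω, f (X 0 ω) * W (X 0 ω) with hb_def
  set c : ℝ := ∫ ω, W (X 0 ω) * W (X 0 ω) with hc_def
  set m : ℝ := ∫ ω, g (X 0 ω) * W (X 0 ω) * W (X 0 ω) with hm_def
  have hbb : |b| ≤ Cf * CW := abs_integral_le' (fun ω => abs_mul_le4 (hfbdd _) (hWbdd _))
  have hmb : |m| ≤ 2 * Cf * CW * CW :=
    abs_integral_le' (fun ω => abs_mul_le4 (abs_mul_le4 (hgb _) (hWbdd _)) (hWbdd _))
  set B : ℝ := 2 * Cf * (2 * Cf) * (CW * CW) with hB_def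
  have hB0 : 0 ≤ B := by positivity
  -- transfer of integrals along identical distribution
  have hint : ∀ (φ : ℝ → ℝ), Measurable φ → ∀ t : ℕ,
      (∫ ω, φ (X t ω)) = ∫ ω, φ (X 0 ω) := by
    intro φ hφ t
    have := ((hid t).comp hφ).integral_eq
    simpa [Function.comp] using this
  have hWt : ∀ t : ℕ, (∫ ω, W (X t ω)) = 0 := fun t => (hint W hW t).trans hW0
  have hgt : ∀ t : ℕ, (∫ ω, g (X t ω)) = 0 := by
    intro t
    have h1 : (∫ ω, g (X t ω)) = (∫ ω, f (X t ω)) - ∫ _ : Ω, (a : ℝ) := by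
      simp only [hg_def]
      exact integral_sub (bdd_integrable (hf.comp (hXmeas t)) (fun ω => hfbdd _))
        (integrable_const a)
    rw [h1, hint f hf t, integral_const]
    simp [ha_def]
  -- pair moments
  have hpairWW : ∀ s v : ℕ, (∫ ω, W (X s ω) * W (X v ω)) = if s = v then c else 0 := by
    intro s v
    by_cases h : s = v
    · subst h
      rw [if_pos rfl, hc_def]
      exact hint (fun x => W x * W x) (hW.mul hW) s
    · rw [if_neg h,
        factor_pair X hXmeas hindep h hW hW hWbdd hWbdd, hWt, zero_mul]
  have hfWt : ∀ t s : ℕ, (∫ ω, f (X t ω) * W (X s ω)) = if t = s then b else 0 := by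
    intro t s
    by_cases h : t = s
    · subst h
      rw [if_pos rfl, hb_def]
      exact hint (fun x => f x * W x) (hf.mul hW) t
    · rw [if_neg h,
        factor_pair X hXmeas hindep h hf hW hfbdd hWbdd, hWt, mul_zero]
  -- triple moments
  have htrip : ∀ t s v : ℕ, (∫ ω, g (X t ω) * W (X s ω) * W (X v ω))
      = if t = s ∧ s = v then m else 0 := by
    intro t s v
    by_cases h : t = s ∧ s = v
    · obtain ⟨rfl, rfl⟩ := h
      rw [if_pos ⟨rfl, rfl⟩, hm_def]
      exact hint (fun x => g x * W x * W x) ((hg.mul hW).mul hW) t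
    · rw [if_neg h]
      by_cases h1 : t = s
      · subst h1
        have h2 : t ≠ v := fun hv => h ⟨rfl, hv⟩
        have key := factor_pair X hXmeas hindep h2 (hg.mul hW) hW
          (fun x => abs_mul_le4 (hgb x) (hWbdd x)) hWbdd
        simp only [Pi.mul_apply] at key
        rw [key, hWt, mul_zero]
      · by_cases h2 : t = v
        · subst h2
          have hre : (∫ ω, g (X t ω) * W (X s ω) * W (X t ω))
              = ∫ ω, g (X t ω) * W (X t ω) * W (X s ω) := by
            apply integral_congr_ae
            filter_upwards with ω
            ring
          have key := factor_pair X hXmeas hindep h1 (hg.mul hW) hW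
            (fun x => abs_mul_le4 (hgb x) (hWbdd x)) hWbdd
          simp only [Pi.mul_apply] at key
          rw [hre, key, hWt, mul_zero]
        · have hre : (∫ ω, g (X t ω) * W (X s ω) * W (X v ω))
              = ∫ ω, W (X s ω) * W (X v ω) * g (X t ω) := by
            apply integral_congr_ae
            filter_upwards with ω
            ring
          rw [hre, factor_one_pair X hXmeas hindep (Ne.symm h1) (Ne.symm h2) hW hW hg
            hWbdd hWbdd hgb, hgt, mul_zero]
  -- quadruple terms
  set δ : ℕ → ℕ → ℕ → ℕ → ℝ :=
    fun t u s v => ∫ ω, g (X t ω) * g (X u ω) * (W (X s ω) * W (X v ω)) with hδ_def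
  have hδb : ∀ t u s v, |δ t u s v| ≤ B := by
    intro t u s v
    rw [hδ_def, hB_def]
    exact abs_integral_le'
      (fun ω => abs_mul_le4 (abs_mul_le4 (hgb _) (hgb _)) (abs_mul_le4 (hWbdd _) (hWbdd _)))
  have hquad0 : ∀ t u s v : ℕ,
      ¬((t = u ∨ t = s ∨ t = v) ∧ (u = t ∨ u = s ∨ u = v) ∧
        (s = t ∨ s = u ∨ s = v) ∧ (v = t ∨ v = u ∨ v = s)) → δ t u s v = 0 := by
    intro t u s v hP
    simp only [hδ_def]
    rcases not_and_or.1 hP with h | h'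
    · push_neg at h
      obtain ⟨h1, h2, h3⟩ := h
      have hre : (∫ ω, g (X t ω) * g (X u ω) * (W (X s ω) * W (X v ω)))
          = ∫ ω, g (X u ω) * W (X s ω) * W (X v ω) * g (X t ω) := by
        apply integral_congr_ae; filter_upwards with ω; ring
      rw [hre, factor_one_triple X hXmeas hindep h1 h2 h3 hg hW hW hg hgb hWbdd hWbdd hgb,
        hgt, mul_zero]
    rcases not_and_or.1 h' with h | h'
    · push_neg at h
      obtain ⟨h1, h2, h3⟩ := h
      have hre : (∫ ω, g (X t ω) * g (X u ω) * (W (X s ω) * W (X v ω)))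
          = ∫ ω, g (X t ω) * W (X s ω) * W (X v ω) * g (X u ω) := by
        apply integral_congr_ae; filter_upwards with ω; ring
      rw [hre, factor_one_triple X hXmeas hindep h1 h2 h3 hg hW hW hg hgb hWbdd hWbdd hgb,
        hgt, mul_zero]
    rcases not_and_or.1 h' with h | h
    · push_neg at h
      obtain ⟨h1, h2, h3⟩ := h
      have hre : (∫ ω, g (X t ω) * g (X u ω) * (W (X s ω) * W (X v ω)))
          = ∫ ω, g (X t ω) * g (X u ω) * W (X v ω) * W (X s ω) := by
        apply integral_congr_ae; filter_upwards with ω; ring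
      rw [hre, factor_one_triple X hXmeas hindep h1 h2 h3 hg hg hW hW hgb hgb hWbdd hWbdd,
        hWt, mul_zero]
    · push_neg at h
      obtain ⟨h1, h2, h3⟩ := h
      have hre : (∫ ω, g (X t ω) * g (X u ω) * (W (X s ω) * W (X v ω)))
          = ∫ ω, g (X t ω) * g (X u ω) * W (X s ω) * W (X v ω) := by
        apply integral_congr_ae; filter_upwards with ω; ring
      rw [hre, factor_one_triple X hXmeas hindep h1 h2 h3 hg hg hW hW hgb hgb hWbdd hWbdd,
        hWt, mul_zero]
  -- the constant
  refine ⟨8 * B + 2 * (Cf * (2 * Cf * CW * CW)) + (Cf * CW) ^ 2, ?_⟩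
  intro T hT
  set R : Finset ℕ := Finset.range T with hR_def
  have hτ : (1 : ℝ) ≤ (T : ℝ) := by exact_mod_cast hT
  have hτ0 : (0 : ℝ) < (T : ℝ) := lt_of_lt_of_le one_pos hτ
  set Z : Ω → ℝ := fun ω => (∑ t ∈ R, f (X t ω)) * ∑ t ∈ R, W (X t ω) with hZ_def
  have hSfb : ∀ ω, |∑ t ∈ R, f (X t ω)| ≤ (T : ℝ) * Cf := by
    intro ω
    calc |∑ t ∈ R, f (X t ω)| ≤ ∑ t ∈ R, |f (X t ω)| := Finset.abs_sum_le_sum_abs _ _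
      _ ≤ R.card • Cf := Finset.sum_le_card_nsmul R _ Cf (fun i _ => hfbdd _)
      _ = (T : ℝ) * Cf := by rw [hR_def, Finset.card_range, nsmul_eq_mul]
  have hSWb : ∀ ω, |∑ t ∈ R, W (X t ω)| ≤ (T : ℝ) * CW := by
    intro ω
    calc |∑ t ∈ R, W (X t ω)| ≤ ∑ t ∈ R, |W (X t ω)| := Finset.abs_sum_le_sum_abs _ _
      _ ≤ R.card • CW := Finset.sum_le_card_nsmul R _ CW (fun i _ => hWbdd _)
      _ = (T : ℝ) * CW := by rw [hR_def, Finset.card_range, nsmul_eq_mul]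
  have hZmeas : Measurable Z := by
    rw [hZ_def]
    exact (Finset.measurable_sum R fun t _ => hf.comp (hXmeas t)).mul
      (Finset.measurable_sum R fun t _ => hW.comp (hXmeas t))
  have hZb : ∀ ω, |Z ω| ≤ ((T : ℝ) * Cf) * ((T : ℝ) * CW) :=
    fun ω => abs_mul_le4 (hSfb ω) (hSWb ω)
  -- rewrite the variance
  have hvar1 : variance (fun ω =>
      ((T : ℝ)⁻¹ * ∑ t ∈ Finset.range T, f (X t ω)) * ∑ t ∈ Finset.range T, W (X t ω)) ℙ
      = ((T : ℝ)⁻¹) ^ 2 * variance Z ℙ := by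
    have : (fun ω =>
        ((T : ℝ)⁻¹ * ∑ t ∈ Finset.range T, f (X t ω)) * ∑ t ∈ Finset.range T, W (X t ω))
        = fun ω => (T : ℝ)⁻¹ * Z ω := by
      funext ω
      rw [hZ_def, hR_def]
      ring
    rw [this, variance_const_mul]
  have hvar2 : variance Z ℙ = (∫ ω, Z ω ^ 2) - (∫ ω, Z ω) ^ 2 := by
    have := variance_eq_sub (μ := (ℙ : Measure Ω)) (X := Z) (bdd_memLp2 hZmeas hZb)
    simpa using this
  -- first moment of Z
  have intfW : ∀ t s : ℕ, Integrable (fun ω => f (X t ω) * W (X s ω)) ℙ :=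
    fun t s => bdd_integrable ((hf.comp (hXmeas t)).mul (hW.comp (hXmeas s)))
      (fun ω => abs_mul_le4 (hfbdd _) (hWbdd _))
  have hZint : (∫ ω, Z ω) = (T : ℝ) * b := by
    have hpt : ∀ ω, Z ω = ∑ t ∈ R, ∑ s ∈ R, f (X t ω) * W (X s ω) := by
      intro ω
      simp only [hZ_def]
      rw [Finset.sum_mul_sum]
    calc (∫ ω, Z ω) = ∫ ω, ∑ t ∈ R, ∑ s ∈ R, f (X t ω) * W (X s ω) := by
          exact integral_congr_ae (Filter.Eventually.of_forall hpt)
      _ = ∑ t ∈ R, ∫ ω, ∑ s ∈ R, f (X t ω) * W (X s ω) :=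
          integral_finset_sum R (fun t _ => integrable_finset_sum R (fun s _ => intfW t s))
      _ = ∑ t ∈ R, ∑ s ∈ R, ∫ ω, f (X t ω) * W (X s ω) :=
          Finset.sum_congr rfl (fun t _ => integral_finset_sum R (fun s _ => intfW t s))
      _ = ∑ t ∈ R, ∑ s ∈ R, if t = s then b else 0 := by
          exact Finset.sum_congr rfl (fun t _ => Finset.sum_congr rfl (fun s _ => hfWt t s))
      _ = ∑ _t ∈ R, b := Finset.sum_congr rfl (fun t ht => by
          rw [Finset.sum_ite_eq R t (fun _ => b), if_pos ht])
      _ = (T : ℝ) * b := by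
          rw [Finset.sum_const, hR_def, Finset.card_range, nsmul_eq_mul]
  -- integrability of pieces
  have intWW : ∀ s v : ℕ, Integrable (fun ω => W (X s ω) * W (X v ω)) ℙ :=
    fun s v => bdd_integrable ((hW.comp (hXmeas s)).mul (hW.comp (hXmeas v)))
      (fun ω => abs_mul_le4 (hWbdd _) (hWbdd _))
  have intgWW : ∀ t s v : ℕ, Integrable (fun ω => g (X t ω) * W (X s ω) * W (X v ω)) ℙ :=
    fun t s v => bdd_integrable (((hg.comp (hXmeas t)).mul (hW.comp (hXmeas s))).mul
      (hW.comp (hXmeas v)))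
      (fun ω => abs_mul_le4 (abs_mul_le4 (hgb _) (hWbdd _)) (hWbdd _))
  have intggWW : ∀ t u s v : ℕ,
      Integrable (fun ω => g (X t ω) * g (X u ω) * (W (X s ω) * W (X v ω))) ℙ :=
    fun t u s v => bdd_integrable (((hg.comp (hXmeas t)).mul (hg.comp (hXmeas u))).mul
      ((hW.comp (hXmeas s)).mul (hW.comp (hXmeas v))))
      (fun ω => abs_mul_le4 (abs_mul_le4 (hgb _) (hgb _)) (abs_mul_le4 (hWbdd _) (hWbdd _)))
  have intffWW : ∀ t u s v : ℕ,
      Integrable (fun ω => f (X t ω) * f (X u ω) * (W (X s ω) * W (X v ω))) ℙ :=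
    fun t u s v => bdd_integrable (((hf.comp (hXmeas t)).mul (hf.comp (hXmeas u))).mul
      ((hW.comp (hXmeas s)).mul (hW.comp (hXmeas v))))
      (fun ω => abs_mul_le4 (abs_mul_le4 (hfbdd _) (hfbdd _)) (abs_mul_le4 (hWbdd _) (hWbdd _)))
  -- per-term expansion of the fourth moment
  have hterm : ∀ t u s v : ℕ,
      (∫ ω, f (X t ω) * f (X u ω) * (W (X s ω) * W (X v ω)))
        = a * a * (if s = v then c else 0)
          + (a * (if t = s ∧ s = v then m else 0)
          + (a * (if u = s ∧ s = v then m else 0)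
          + δ t u s v)) := by
    intro t u s v
    have e1 : ∀ ω, f (X t ω) * f (X u ω) * (W (X s ω) * W (X v ω))
        = a * a * (W (X s ω) * W (X v ω))
          + (a * (g (X t ω) * W (X s ω) * W (X v ω))
          + (a * (g (X u ω) * W (X s ω) * W (X v ω))
          + g (X t ω) * g (X u ω) * (W (X s ω) * W (X v ω)))) := by
      intro ω
      simp only [hg_def]
      ring
    have intA : Integrable (fun ω => a * a * (W (X s ω) * W (X v ω))) ℙ :=
      (intWW s v).const_mul (a * a)
    have intB : Integrable (fun ω => a * (g (X t ω) * W (X s ω) * W (X v ω))) ℙ :=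
      (intgWW t s v).const_mul a
    have intC : Integrable (fun ω => a * (g (X u ω) * W (X s ω) * W (X v ω))) ℙ :=
      (intgWW u s v).const_mul a
    have intCD : Integrable (fun ω => a * (g (X u ω) * W (X s ω) * W (X v ω))
        + g (X t ω) * g (X u ω) * (W (X s ω) * W (X v ω))) ℙ :=
      intC.add (intggWW t u s v)
    simp only [hδ_def]
    calc (∫ ω, f (X t ω) * f (X u ω) * (W (X s ω) * W (X v ω)))
        = ∫ ω, (a * a * (W (X s ω) * W (X v ω))
          + (a * (g (X t ω) * W (X s ω) * W (X v ω))
          + (a * (g (X u ω) * W (X s ω) * W (X v ω))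
          + g (X t ω) * g (X u ω) * (W (X s ω) * W (X v ω))))) :=
        integral_congr_ae (Filter.Eventually.of_forall e1)
      _ = (∫ ω, a * a * (W (X s ω) * W (X v ω)))
          + ∫ ω, (a * (g (X t ω) * W (X s ω) * W (X v ω))
          + (a * (g (X u ω) * W (X s ω) * W (X v ω))
          + g (X t ω) * g (X u ω) * (W (X s ω) * W (X v ω)))) :=
        integral_add intA (intB.add (intC.add (intggWW t u s v)))
      _ = (∫ ω, a * a * (W (X s ω) * W (X v ω)))
          + ((∫ ω, a * (g (X t ω) * W (X s ω) * W (X v ω)))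
          + ∫ ω, (a * (g (X u ω) * W (X s ω) * W (X v ω))
          + g (X t ω) * g (X u ω) * (W (X s ω) * W (X v ω)))) := by
        rw [integral_add intB intCD]
      _ = (∫ ω, a * a * (W (X s ω) * W (X v ω)))
          + ((∫ ω, a * (g (X t ω) * W (X s ω) * W (X v ω)))
          + ((∫ ω, a * (g (X u ω) * W (X s ω) * W (X v ω)))
          + ∫ ω, g (X t ω) * g (X u ω) * (W (X s ω) * W (X v ω)))) := by
        rw [integral_add intC (intggWW t u s v)]
      _ = a * a * (if s = v then c else 0)
          + (a * (if t = s ∧ s = v then m else 0)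
          + (a * (if u = s ∧ s = v then m else 0)
          + ∫ ω, g (X t ω) * g (X u ω) * (W (X s ω) * W (X v ω)))) := by
        rw [integral_const_mul, integral_const_mul, integral_const_mul, hpairWW s v,
          htrip t s v, htrip u s v]
  -- expansion of the second moment of Z
  set Δ : ℝ := ∑ t ∈ R, ∑ s ∈ R, ∑ u ∈ R, ∑ v ∈ R, δ t u s v with hΔ_def
  have hZsq : (∫ ω, Z ω ^ 2)
      = ∑ t ∈ R, ∑ s ∈ R, ∑ u ∈ R, ∑ v ∈ R,
          (a * a * (if s = v then c else 0)
            + (a * (if t = s ∧ s = v then m else 0)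
            + (a * (if u = s ∧ s = v then m else 0)
            + δ t u s v))) := by
    have hpt : ∀ ω, Z ω ^ 2 = ∑ t ∈ R, ∑ s ∈ R, ∑ u ∈ R, ∑ v ∈ R,
        f (X t ω) * f (X u ω) * (W (X s ω) * W (X v ω)) := by
      intro ω
      have h1 : Z ω ^ 2 = (∑ t ∈ R, ∑ u ∈ R, f (X t ω) * f (X u ω))
          * (∑ s ∈ R, ∑ v ∈ R, W (X s ω) * W (X v ω)) := by
        simp only [hZ_def]
        rw [← Finset.sum_mul_sum, ← Finset.sum_mul_sum]
        ring
      rw [h1, Finset.sum_mul_sum]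
      refine Finset.sum_congr rfl fun t _ => Finset.sum_congr rfl fun s _ => ?_
      rw [Finset.sum_mul_sum]
    calc (∫ ω, Z ω ^ 2)
        = ∫ ω, ∑ t ∈ R, ∑ s ∈ R, ∑ u ∈ R, ∑ v ∈ R,
            f (X t ω) * f (X u ω) * (W (X s ω) * W (X v ω)) :=
          integral_congr_ae (Filter.Eventually.of_forall hpt)
      _ = ∑ t ∈ R, ∑ s ∈ R, ∑ u ∈ R, ∑ v ∈ R,
            ∫ ω, f (X t ω) * f (X u ω) * (W (X s ω) * W (X v ω)) := by
          rw [integral_finset_sum R (fun t _ => integrable_finset_sum R fun s _ =>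
            integrable_finset_sum R fun u _ => integrable_finset_sum R fun v _ =>
              intffWW t u s v)]
          refine Finset.sum_congr rfl fun t _ => ?_
          rw [integral_finset_sum R (fun s _ => integrable_finset_sum R fun u _ =>
            integrable_finset_sum R fun v _ => intffWW t u s v)]
          refine Finset.sum_congr rfl fun s _ => ?_
          rw [integral_finset_sum R (fun u _ => integrable_finset_sum R fun v _ =>
            intffWW t u s v)]
          refine Finset.sum_congr rfl fun u _ => ?_
          exact integral_finset_sum R (fun v _ => intffWW t u s v)
      _ = _ := Finset.sum_congr rfl fun t _ => Finset.sum_congr rfl fun s _ =>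
            Finset.sum_congr rfl fun u _ => Finset.sum_congr rfl fun v _ => hterm t u s v
  have hS1 : (∑ t ∈ R, ∑ s ∈ R, ∑ u ∈ R, ∑ v ∈ R, a * a * (if s = v then c else 0))
      = (T : ℝ) ^ 3 * (a * a * c) := by
    have hinner : ∀ s ∈ R, (∑ v ∈ R, a * a * (if s = v then c else 0)) = a * a * c := by
      intro s hs
      rw [← Finset.mul_sum, Finset.sum_ite_eq R s fun _ => c, if_pos hs]
    calc (∑ t ∈ R, ∑ s ∈ R, ∑ u ∈ R, ∑ v ∈ R, a * a * (if s = v then c else 0))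
        = ∑ t ∈ R, ∑ s ∈ R, ∑ u ∈ R, (a * a * c) := by
          refine Finset.sum_congr rfl fun t _ => Finset.sum_congr rfl fun s hs =>
            Finset.sum_congr rfl fun u _ => hinner s hs
      _ = (T : ℝ) ^ 3 * (a * a * c) := by
          simp only [Finset.sum_const, hR_def, Finset.card_range, nsmul_eq_mul]
          ring
  have hS2 : (∑ t ∈ R, ∑ s ∈ R, ∑ u ∈ R, ∑ v ∈ R,
      a * (if t = s ∧ s = v then m else 0)) = (T : ℝ) ^ 2 * (a * m) := by
    have hinner : ∀ t ∈ R, ∀ s ∈ R, (∑ v ∈ R, a * (if t = s ∧ s = v then m else 0))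
        = if t = s then a * m else 0 := by
      intro t ht s hs
      by_cases h : t = s
      · subst h
        have he : (∑ v ∈ R, a * (if t = t ∧ t = v then m else 0))
            = ∑ v ∈ R, a * (if t = v then m else 0) := by
          refine Finset.sum_congr rfl fun v _ => ?_
          simp
        rw [if_pos rfl, he, ← Finset.mul_sum, Finset.sum_ite_eq R t fun _ => m, if_pos ht]
      · have he : (∑ v ∈ R, a * (if t = s ∧ s = v then m else 0)) = 0 := by
          refine Finset.sum_eq_zero fun v _ => ?_
          simp [h]
        rw [if_neg h, he]
    calc (∑ t ∈ R, ∑ s ∈ R, ∑ u ∈ R, ∑ v ∈ R, a * (if t = s ∧ s = v then m else 0))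
        = ∑ t ∈ R, ∑ s ∈ R, (T : ℝ) * (if t = s then a * m else 0) := by
          refine Finset.sum_congr rfl fun t ht => Finset.sum_congr rfl fun s hs => ?_
          rw [Finset.sum_congr rfl (fun u _ => hinner t ht s hs), Finset.sum_const,
            hR_def, Finset.card_range, nsmul_eq_mul]
      _ = ∑ t ∈ R, (T : ℝ) * (a * m) := by
          refine Finset.sum_congr rfl fun t ht => ?_
          rw [← Finset.mul_sum, Finset.sum_ite_eq R t fun _ => a * m, if_pos ht]
      _ = (T : ℝ) ^ 2 * (a * m) := by
          rw [Finset.sum_const, hR_def, Finset.card_range, nsmul_eq_mul]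
          ring
  have hS3 : (∑ t ∈ R, ∑ s ∈ R, ∑ u ∈ R, ∑ v ∈ R,
      a * (if u = s ∧ s = v then m else 0)) = (T : ℝ) ^ 2 * (a * m) := by
    have hinner : ∀ u ∈ R, ∀ s ∈ R, (∑ v ∈ R, a * (if u = s ∧ s = v then m else 0))
        = if u = s then a * m else 0 := by
      intro u hu s hs
      by_cases h : u = s
      · subst h
        have he : (∑ v ∈ R, a * (if u = u ∧ u = v then m else 0))
            = ∑ v ∈ R, a * (if u = v then m else 0) := by
          refine Finset.sum_congr rfl fun v _ => ?_
          simp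
        rw [if_pos rfl, he, ← Finset.mul_sum, Finset.sum_ite_eq R u fun _ => m, if_pos hu]
      · have he : (∑ v ∈ R, a * (if u = s ∧ s = v then m else 0)) = 0 := by
          refine Finset.sum_eq_zero fun v _ => ?_
          simp [h]
        rw [if_neg h, he]
    calc (∑ t ∈ R, ∑ s ∈ R, ∑ u ∈ R, ∑ v ∈ R, a * (if u = s ∧ s = v then m else 0))
        = ∑ t ∈ R, ∑ s ∈ R, (a * m) := by
          refine Finset.sum_congr rfl fun t ht => Finset.sum_congr rfl fun s hs => ?_
          rw [Finset.sum_congr rfl (fun u hu => hinner u hu s hs),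
            Finset.sum_ite_eq' R s fun _ => a * m, if_pos hs]
      _ = (T : ℝ) ^ 2 * (a * m) := by
          simp only [Finset.sum_const, hR_def, Finset.card_range, nsmul_eq_mul]
          ring
  have hsplit : (∫ ω, Z ω ^ 2)
      = (T : ℝ) ^ 3 * (a * a * c) + ((T : ℝ) ^ 2 * (a * m) + ((T : ℝ) ^ 2 * (a * m) + Δ)) := by
    rw [hZsq]
    simp only [Finset.sum_add_distrib]
    rw [hS1, hS2, hS3, hΔ_def]
  -- bound on the quadruple remainder
  have hΔb : |Δ| ≤ 8 * (T : ℝ) ^ 2 * B := by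
    have h2 : Δ = ∑ t ∈ R, ∑ u ∈ R, ∑ s ∈ R, ∑ v ∈ R, δ t u s v := by
      rw [hΔ_def]
      exact Finset.sum_congr rfl fun t _ => Finset.sum_comm
    have h1 : Δ = ∑ q ∈ (R ×ˢ R) ×ˢ (R ×ˢ R),
        δ q.1.1 q.1.2 q.2.1 q.2.2 := by
      rw [h2]
      simp [Finset.sum_product]
    set P : (ℕ × ℕ) × (ℕ × ℕ) → Prop := fun q =>
        (q.1.1 = q.1.2 ∨ q.1.1 = q.2.1 ∨ q.1.1 = q.2.2) ∧
        (q.1.2 = q.1.1 ∨ q.1.2 = q.2.1 ∨ q.1.2 = q.2.2) ∧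
        (q.2.1 = q.1.1 ∨ q.2.1 = q.1.2 ∨ q.2.1 = q.2.2) ∧
        (q.2.2 = q.1.1 ∨ q.2.2 = q.1.2 ∨ q.2.2 = q.2.1) with hP_def
    have h3 : Δ = ∑ q ∈ ((R ×ˢ R) ×ˢ (R ×ˢ R)).filter P,
        δ q.1.1 q.1.2 q.2.1 q.2.2 := by
      rw [h1]
      refine (Finset.sum_filter_of_ne fun q _ hne => ?_).symm
      by_contra hP
      exact hne (hquad0 q.1.1 q.1.2 q.2.1 q.2.2 hP)
    have hcard : ((((R ×ˢ R) ×ˢ (R ×ˢ R)).filter P).card : ℝ) ≤ 8 * (T : ℝ) ^ 2 := by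
      have := quad_count T
      rw [hR_def]
      exact_mod_cast this
    calc |Δ| = |∑ q ∈ ((R ×ˢ R) ×ˢ (R ×ˢ R)).filter P, δ q.1.1 q.1.2 q.2.1 q.2.2| := by
          rw [h3]
      _ ≤ ∑ q ∈ ((R ×ˢ R) ×ˢ (R ×ˢ R)).filter P, |δ q.1.1 q.1.2 q.2.1 q.2.2| :=
          Finset.abs_sum_le_sum_abs _ _
      _ ≤ (((R ×ˢ R) ×ˢ (R ×ˢ R)).filter P).card • B :=
          Finset.sum_le_card_nsmul _ _ B (fun q _ => hδb _ _ _ _)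
      _ = ((((R ×ˢ R) ×ˢ (R ×ˢ R)).filter P).card : ℝ) * B := nsmul_eq_mul _ _
      _ ≤ 8 * (T : ℝ) ^ 2 * B := mul_le_mul_of_nonneg_right hcard hB0
  -- final algebra
  have hτne : (T : ℝ) ≠ 0 := ne_of_gt hτ0
  have hc2 : (∫ ω, (W (X 0 ω)) ^ 2) = c := by
    rw [hc_def]
    refine integral_congr_ae (Filter.Eventually.of_forall fun ω => ?_)
    simp [pow_two]
  have hfinal : variance (fun ω =>
      ((T : ℝ)⁻¹ * ∑ t ∈ Finset.range T, f (X t ω)) * ∑ t ∈ Finset.range T, W (X t ω)) ℙ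
      - (T : ℝ) * (a ^ 2 * c) = ((T : ℝ)⁻¹) ^ 2 * Δ + 2 * (a * m) - b ^ 2 := by
    rw [hvar1, hvar2, hsplit, hZint]
    field_simp
    ring
  rw [hc2, hfinal]
  have habs : |((T : ℝ)⁻¹) ^ 2 * Δ + 2 * (a * m) - b ^ 2|
      ≤ ((T : ℝ)⁻¹) ^ 2 * |Δ| + 2 * |a * m| + |b| ^ 2 := by
    have h1 : |((T : ℝ)⁻¹) ^ 2 * Δ + 2 * (a * m) - b ^ 2|
        ≤ |((T : ℝ)⁻¹) ^ 2 * Δ + 2 * (a * m)| + |b ^ 2| := abs_sub _ _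
    have h2 : |((T : ℝ)⁻¹) ^ 2 * Δ + 2 * (a * m)|
        ≤ |((T : ℝ)⁻¹) ^ 2 * Δ| + |2 * (a * m)| := abs_add_le _ _
    have h3 : |((T : ℝ)⁻¹) ^ 2 * Δ| = ((T : ℝ)⁻¹) ^ 2 * |Δ| := by
      rw [abs_mul, abs_of_nonneg (by positivity : (0:ℝ) ≤ ((T : ℝ)⁻¹) ^ 2)]
    have h4 : |2 * (a * m)| = 2 * |a * m| := by
      rw [abs_mul, abs_of_nonneg (by norm_num : (0:ℝ) ≤ (2:ℝ))]
    have h5 : |b ^ 2| = |b| ^ 2 := by rw [abs_pow]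
    linarith
  have hΔ2 : ((T : ℝ)⁻¹) ^ 2 * |Δ| ≤ 8 * B := by
    have := mul_le_mul_of_nonneg_left hΔb (by positivity : (0:ℝ) ≤ ((T : ℝ)⁻¹) ^ 2)
    calc ((T : ℝ)⁻¹) ^ 2 * |Δ| ≤ ((T : ℝ)⁻¹) ^ 2 * (8 * (T : ℝ) ^ 2 * B) := this
      _ = 8 * B := by
          rw [inv_pow]
          field_simp
  have ham : |a * m| ≤ Cf * (2 * Cf * CW * CW) := abs_mul_le4 ha hmb
  have hbsq : |b| ^ 2 ≤ (Cf * CW) ^ 2 :=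
    pow_le_pow_left₀ (abs_nonneg b) hbb 2
  linarith
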